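/- Suppose a sequence of nonnegative reals e(n) satisfies the recursion (n)_K · e(n+1) = (n-1)_K · e(n) + (n-1)_{K-1} · K · (1 + o(1)) as n → ∞, for a fixed positive integer K. Then e(n) → 1 as n → ∞. -/

import Mathlib

open Filter Polynomial Finset Asymptotics

/-- If a sequence of nonnegative reals `e n` satisfies the recursion
`(n)_K · e(n+1) = (n-1)_K · e(n) + (n-1)_{K-1} · K · (1 + o(1))` as `n → ∞`,
for a fixed positive integer `K`, then `e n → 1`. -/
theorem recursion_limit (K : ℕ) (hK : 1 ≤ K) (e : ℕ → ℝ) (he : ∀ n, 0 ≤ e n)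
    (g : ℕ → ℝ) (hg : Tendsto g atTop (nhds 1))
    (hrec : ∀ᶠ n : ℕ in atTop,
      (descPochhammer ℝ K).eval (n : ℝ) * e (n + 1) =
        (descPochhammer ℝ K).eval ((n : ℝ) - 1) * e n +
          (descPochhammer ℝ (K - 1)).eval ((n : ℝ) - 1) * (K : ℝ) * g n) :
    Tendsto e atTop (nhds 1) := by
  -- key identity
  have key : ∀ x : ℝ, (descPochhammer ℝ K).eval x - (descPochhammer ℝ K).eval (x - 1)
      = K * (descPochhammer ℝ (K - 1)).eval (x - 1) := by
    intro x
    obtain ⟨m, rfl⟩ := Nat.exists_eq_add_of_le hK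
    rw [Nat.add_sub_cancel_left]
    have h1 : (descPochhammer ℝ (1 + m)).eval x = x * (descPochhammer ℝ m).eval (x - 1) := by
      rw [add_comm 1 m, descPochhammer_succ_left]
      simp [eval_comp]
    have h2 : (descPochhammer ℝ (1 + m)).eval (x - 1)
        = (descPochhammer ℝ m).eval (x - 1) * (x - 1 - m) := by
      rw [add_comm 1 m, descPochhammer_succ_eval]
    rw [h1, h2]; push_cast; ring
  set D : ℕ → ℝ := fun n => (descPochhammer ℝ K).eval ((n : ℝ) - 1) with hD
  -- D at natural values is a descFactorial
  have hDval : ∀ n : ℕ, 1 ≤ n → D n = ((n - 1).descFactorial K : ℝ) := by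
    intro n hn
    have : ((n : ℝ) - 1) = (((n - 1 : ℕ) : ℝ)) := by
      have : (n : ℝ) = ((n - 1 : ℕ) : ℝ) + 1 := by
        rw [Nat.cast_sub hn]; ring
      rw [this]; ring
    rw [hD]; simp only [this, descPochhammer_eval_eq_descFactorial]
  have hDpos : ∀ n : ℕ, K + 1 ≤ n → 0 < D n := by
    intro n hn
    rw [hDval n (le_trans (Nat.le_add_left 1 K) hn)]
    have : (n - 1).descFactorial K ≠ 0 := by
      rw [Ne, Nat.descFactorial_eq_zero_iff_lt]; omega
    exact_mod_cast Nat.pos_of_ne_zero this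
  have hDtop : Tendsto D atTop atTop := by
    have hdeg : 0 < (descPochhammer ℝ K).degree := by
      rw [degree_eq_natDegree (monic_descPochhammer ℝ K).ne_zero, descPochhammer_natDegree]
      exact_mod_cast hK
    have h1 : Tendsto (fun x : ℝ => (descPochhammer ℝ K).eval x) atTop atTop :=
      tendsto_atTop_of_leadingCoeff_nonneg _ hdeg (by
        rw [(monic_descPochhammer ℝ K).leadingCoeff]; norm_num)
    have h2 : Tendsto (fun n : ℕ => (n : ℝ) - 1) atTop atTop := by
      simpa [sub_eq_add_neg] using
        tendsto_atTop_add_const_right atTop (-1 : ℝ) tendsto_natCast_atTop_atTop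
    exact h1.comp h2
  set w : ℕ → ℝ := fun a => if a = 0 then 0 else D (a + 1) - D a with hw
  have hwval : ∀ a : ℕ, 1 ≤ a → w a = K * (descPochhammer ℝ (K - 1)).eval ((a : ℝ) - 1) := by
    intro a ha
    have hDa1 : D (a + 1) = (descPochhammer ℝ K).eval (a : ℝ) := by
      rw [hD]; push_cast; ring_nf
    rw [hw]; simp only [Nat.one_le_iff_ne_zero.mp ha, if_false]
    rw [hDa1, hD]
    exact key (a : ℝ)
  have hw_nonneg : ∀ a : ℕ, 0 ≤ w a := by
    intro a
    rcases Nat.eq_zero_or_pos a with h | h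
    · simp [hw, h]
    · rw [hwval a h]
      have : ((a : ℝ) - 1) = (((a - 1 : ℕ) : ℝ)) := by
        rw [Nat.cast_sub h]; ring
      rw [this, descPochhammer_eval_eq_descFactorial]
      positivity
  have sumw : ∀ n : ℕ, 1 ≤ n → ∑ i ∈ range n, w i = D n - D 1 := by
    intro n hn
    induction n with
    | zero => omega
    | succ m ih =>
      rcases Nat.eq_zero_or_pos m with h | h
      · subst h; simp [hw]
      · rw [Finset.sum_range_succ, ih h, hw]
        simp only [Nat.one_le_iff_ne_zero.mp h, if_false]
        ring
  have sumw_top : Tendsto (fun n => ∑ i ∈ range n, w i) atTop atTop := by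
    apply Tendsto.congr' _ (tendsto_atTop_add_const_right atTop (-(D 1)) hDtop)
    filter_upwards [eventually_ge_atTop 1] with n hn
    rw [sumw n hn]; ring
  set h : ℕ → ℝ := fun a => w a * (g a - 1) with hh
  have hho : h =o[atTop] w := by
    have h1 : (fun a => g a - 1) =o[atTop] (fun _ : ℕ => (1 : ℝ)) := by
      rw [isLittleO_one_iff]
      simpa using hg.sub_const 1
    have := (isBigO_refl w atTop).mul_isLittleO h1
    simpa [hh, mul_one] using this
  have hsumo : (fun n => ∑ i ∈ range n, h i) =o[atTop] (fun n => ∑ i ∈ range n, w i) :=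
    hho.sum_range hw_nonneg sumw_top
  have hsumD : (fun n => ∑ i ∈ range n, w i) =O[atTop] D := by
    apply IsBigO.of_bound 2
    filter_upwards [eventually_ge_atTop 1, hDtop.eventually_ge_atTop (|D 1|)] with n h1 h2
    rw [sumw n h1, Real.norm_eq_abs, Real.norm_eq_abs]
    have h3 : 0 ≤ D n := le_trans (abs_nonneg _) h2
    rw [abs_of_nonneg h3]
    calc |D n - D 1| ≤ |D n| + |D 1| := abs_sub _ _
      _ ≤ D n + D n := by rw [abs_of_nonneg h3]; linarith
      _ = 2 * D n := by ring
  have hTo : (fun n => ∑ i ∈ range n, h i) =o[atTop] D := hsumo.trans_isBigO hsumD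
  -- the exact formula
  obtain ⟨N₀, hN₀⟩ := eventually_atTop.1 hrec
  set N := max N₀ (K + 1) with hN
  set C : ℝ := D N * e N - D N - ∑ i ∈ range N, h i with hC
  have formula : ∀ n : ℕ, N ≤ n → D n * e n = C + D n + ∑ i ∈ range n, h i := by
    intro n hn
    induction n with
    | zero =>
      exfalso
      have h1 : K + 1 ≤ N := le_max_right _ _
      omega
    | succ m ih =>
      rcases Nat.lt_or_ge m N with hm | hm
      · have : N = m + 1 := by omega
        rw [← this, hC]; ring
      · have hrecm := hN₀ m (le_trans (le_max_left _ _) hm)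
        have hm1 : 1 ≤ m := by omega
        have hDm1 : D (m + 1) = (descPochhammer ℝ K).eval ((m : ℝ)) := by
          rw [hD]; push_cast; ring_nf
        have hwm : w m = D (m + 1) - D m := by
          rw [hw]; simp [Nat.one_le_iff_ne_zero.mp hm1]
        have hQ : (descPochhammer ℝ (K - 1)).eval ((m : ℝ) - 1) * (K : ℝ) = D (m + 1) - D m := by
          rw [hDm1, hD, mul_comm]
          exact (key (m : ℝ)).symm
        have step : D (m + 1) * e (m + 1) = D m * e m + (D (m + 1) - D m) * g m := by
          have hDm : D m = (descPochhammer ℝ K).eval ((m : ℝ) - 1) := rfl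
          rw [hDm1, hDm, hrecm]
          linear_combination (-(g m)) * key (m : ℝ)
        rw [step, ih hm, Finset.sum_range_succ, hh]
        simp only [hwm]
        ring
  -- conclude
  have hDne : ∀ᶠ n in atTop, D n ≠ 0 := by
    filter_upwards [eventually_ge_atTop (K + 1)] with n hn
    exact (hDpos n hn).ne'
  have hratio : Tendsto (fun n => (C + ∑ i ∈ range n, h i) / D n) atTop (nhds 0) := by
    have h1 : Tendsto (fun n => C / D n) atTop (nhds 0) :=
      tendsto_const_nhds.div_atTop hDtop
    have h2 : Tendsto (fun n => (∑ i ∈ range n, h i) / D n) atTop (nhds 0) := by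
      rw [← isLittleO_iff_tendsto']
      · exact hTo
      · filter_upwards [hDne] with n hn h'
        exact absurd h' hn
    have := h1.add h2
    rw [add_zero] at this
    apply this.congr
    intro n
    rw [← add_div]
  have heq : e =ᶠ[atTop] fun n => 1 + (C + ∑ i ∈ range n, h i) / D n := by
    filter_upwards [eventually_ge_atTop N, eventually_ge_atTop (K + 1)] with n hn hn'
    have hD0 : D n ≠ 0 := (hDpos n hn').ne'
    field_simp
    rw [mul_comm (e n) (D n), formula n hn]
    ring
  rw [Filter.tendsto_congr' heq]
  have := (tendsto_const_nhds (x := (1:ℝ)) (f := atTop (α := ℕ))).add hratio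
  simpa using this
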